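/- Let (Ω, 𝓕, P) be a probability space, A : Ω → ℝⁿˣⁿ measurable and essentially bounded, and (Āₖ)ₖ∈ℕ, (Ãₖ)ₖ∈ℕ sequences of measurable ℝⁿˣⁿ-valued random variables with ∑ₖ E|Āₖ|² < ∞ and ∑ₖ E|Ãₖ|² < ∞, so that 𝒜ξ = Aξ + ∑ₖ Āₖ E[Ãₖ ξ] defines a bounded linear operator on L²(Ω; ℝⁿ). Then the Hilbert-space adjoint of 𝒜 is given by 𝒜* y = Aᵀ y + ∑ₖ Ãₖᵀ E[Āₖᵀ y] for all y ∈ L²(Ω; ℝⁿ). -/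

import Mathlib

open MeasureTheory Filter
open scoped RealInnerProductSpace

/-- Matrix–vector multiplication, viewed as a map between Euclidean spaces. -/
noncomputable def matVec {n m : ℕ} (M : Matrix (Fin n) (Fin m) ℝ)
    (v : EuclideanSpace ℝ (Fin m)) : EuclideanSpace ℝ (Fin n) :=
  (WithLp.equiv 2 (Fin n → ℝ)).symm (M.mulVec ((WithLp.equiv 2 (Fin m → ℝ)) v))

/-- Square of the Frobenius norm of a real matrix. -/
def frobSq {n m : ℕ} (M : Matrix (Fin n) (Fin m) ℝ) : ℝ := ∑ i, ∑ j, (M i j) ^ 2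

/-- Frobenius norm of a real matrix. -/
noncomputable def frob {n m : ℕ} (M : Matrix (Fin n) (Fin m) ℝ) : ℝ :=
  Real.sqrt (frobSq M)

open scoped ENNReal

section helpers

lemma matVec_apply' {n m : ℕ} (M : Matrix (Fin n) (Fin m) ℝ) (v : EuclideanSpace ℝ (Fin m))
    (i : Fin n) : matVec M v i = ∑ j, M i j * v j := rfl

lemma frobSq_nonneg {n m : ℕ} (M : Matrix (Fin n) (Fin m) ℝ) : 0 ≤ frobSq M :=
  Finset.sum_nonneg fun _ _ => Finset.sum_nonneg fun _ _ => sq_nonneg _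

lemma frob_nonneg {n m : ℕ} (M : Matrix (Fin n) (Fin m) ℝ) : 0 ≤ frob M := Real.sqrt_nonneg _

lemma frob_sq {n m : ℕ} (M : Matrix (Fin n) (Fin m) ℝ) : frob M ^ 2 = frobSq M :=
  Real.sq_sqrt (frobSq_nonneg M)

lemma frobSq_transpose {n m : ℕ} (M : Matrix (Fin n) (Fin m) ℝ) :
    frobSq M.transpose = frobSq M := Finset.sum_comm

lemma inner_matVec {n m : ℕ} (M : Matrix (Fin n) (Fin m) ℝ) (x : EuclideanSpace ℝ (Fin m))
    (v : EuclideanSpace ℝ (Fin n)) : ⟪matVec M x, v⟫ = ⟪x, matVec M.transpose v⟫ := by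
  simp only [PiLp.inner_apply, RCLike.inner_apply, conj_trivial, matVec_apply',
    Matrix.transpose_apply, Finset.sum_mul, Finset.mul_sum]
  rw [Finset.sum_comm]
  congr 1; ext i; congr 1; ext j; ring

lemma norm_matVec_le {n m : ℕ} (M : Matrix (Fin n) (Fin m) ℝ) (v : EuclideanSpace ℝ (Fin m)) :
    ‖matVec M v‖ ≤ frob M * ‖v‖ := by
  rw [EuclideanSpace.norm_eq, frob, ← Real.sqrt_sq (norm_nonneg v),
    ← Real.sqrt_mul (frobSq_nonneg M)]
  apply Real.sqrt_le_sqrt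
  have hn : ‖v‖ ^ 2 = ∑ j, v j ^ 2 := by
    rw [EuclideanSpace.norm_eq, Real.sq_sqrt (Finset.sum_nonneg fun _ _ => sq_nonneg _)]
    simp [Real.norm_eq_abs, sq_abs]
  rw [hn, frobSq, Finset.sum_mul]
  apply Finset.sum_le_sum
  intro i _
  simp only [matVec_apply', Real.norm_eq_abs, sq_abs]
  exact Finset.sum_mul_sq_le_sq_mul_sq _ _ _

variable {Ω : Type*} [MeasurableSpace Ω] {P : Measure Ω} {n : ℕ}

lemma measurable_matVec {B : Ω → Matrix (Fin n) (Fin n) ℝ}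
    (hB : ∀ i j, Measurable fun ω => B ω i j) {x : Ω → EuclideanSpace ℝ (Fin n)}
    (hx : Measurable x) : Measurable fun ω => matVec (B ω) (x ω) := by
  apply (WithLp.measurable_toLp 2 (Fin n → ℝ)).comp (f := fun ω => (B ω).mulVec (WithLp.ofLp (x ω)))
  apply measurable_pi_iff.mpr
  intro i
  change Measurable fun ω => matVec (B ω) (x ω) i
  have : ∀ ω, matVec (B ω) (x ω) i = ∑ j, B ω i j * x ω j := fun ω => rfl
  simp_rw [this]
  exact Finset.measurable_sum _ fun j _ => (hB i j).mul ((measurable_pi_apply j).comp ((WithLp.measurable_ofLp 2 _).comp hx))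

lemma measurable_frobSq {B : Ω → Matrix (Fin n) (Fin n) ℝ}
    (hB : ∀ i j, Measurable fun ω => B ω i j) : Measurable fun ω => frobSq (B ω) :=
  Finset.measurable_sum _ fun i _ => Finset.measurable_sum _ fun j _ => (hB i j).pow_const 2

lemma measurable_frob {B : Ω → Matrix (Fin n) (Fin n) ℝ}
    (hB : ∀ i j, Measurable fun ω => B ω i j) : Measurable fun ω => frob (B ω) :=
  Real.continuous_sqrt.measurable.comp (measurable_frobSq hB)

lemma integrable_mul_of_memL2 {f g : Ω → ℝ} (hf : MemLp f 2 P) (hg : MemLp g 2 P) :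
    Integrable (fun ω => f ω * g ω) P := by
  have h := MeasureTheory.L2.integrable_inner (𝕜 := ℝ) (hf.toLp f) (hg.toLp g)
  refine h.congr ?_
  filter_upwards [hf.coeFn_toLp, hg.coeFn_toLp] with ω h1 h2
  simp [h1, h2, RCLike.inner_apply, mul_comm]

lemma int_CS {f g : Ω → ℝ} (hf : MemLp f 2 P) (hg : MemLp g 2 P)
    (hf0 : 0 ≤ f) (hg0 : 0 ≤ g) :
    ∫ ω, f ω * g ω ∂P ≤ Real.sqrt (∫ ω, f ω ^ 2 ∂P) * Real.sqrt (∫ ω, g ω ^ 2 ∂P) := by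
  have hpq : Real.HolderConjugate 2 2 := Real.HolderConjugate.two_two
  have h2 : (ENNReal.ofReal (2:ℝ)) = 2 := by simp
  have := integral_mul_le_Lp_mul_Lq_of_nonneg (μ := P) hpq
    (Eventually.of_forall hf0) (Eventually.of_forall hg0) (h2 ▸ hf) (h2 ▸ hg)
  refine this.trans_eq ?_
  rw [Real.sqrt_eq_rpow, Real.sqrt_eq_rpow]
  congr 2 <;> [skip; skip] <;> · apply integral_congr_ae; filter_upwards with ω; norm_num

lemma memL2_frob {B : Ω → Matrix (Fin n) (Fin n) ℝ}
    (hB : ∀ i j, Measurable fun ω => B ω i j)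
    (hBint : Integrable (fun ω => frobSq (B ω)) P) :
    MemLp (fun ω => frob (B ω)) 2 P := by
  refine (memLp_two_iff_integrable_sq (measurable_frob hB).aestronglyMeasurable).mpr ?_
  refine hBint.congr ?_
  filter_upwards with ω
  rw [frob_sq]

lemma integrable_matVec {B : Ω → Matrix (Fin n) (Fin n) ℝ}
    (hB : ∀ i j, Measurable fun ω => B ω i j)
    (hBint : Integrable (fun ω => frobSq (B ω)) P)
    {x : Ω → EuclideanSpace ℝ (Fin n)} (hxm : Measurable x) (hx : MemLp x 2 P) :
    Integrable (fun ω => matVec (B ω) (x ω)) P := by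
  refine Integrable.mono' (integrable_mul_of_memL2 (memL2_frob hB hBint) hx.norm)
    (measurable_matVec hB hxm).aestronglyMeasurable ?_
  filter_upwards with ω using norm_matVec_le _ _

lemma norm_integral_matVec_le {B : Ω → Matrix (Fin n) (Fin n) ℝ}
    (hB : ∀ i j, Measurable fun ω => B ω i j)
    (hBint : Integrable (fun ω => frobSq (B ω)) P)
    {x : Ω → EuclideanSpace ℝ (Fin n)} (hxm : Measurable x) (hx : MemLp x 2 P) :
    ‖∫ ω, matVec (B ω) (x ω) ∂P‖ ≤
      Real.sqrt (∫ ω, frobSq (B ω) ∂P) * Real.sqrt (∫ ω, ‖x ω‖ ^ 2 ∂P) := by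
  have h1 : ‖∫ ω, matVec (B ω) (x ω) ∂P‖ ≤ ∫ ω, ‖matVec (B ω) (x ω)‖ ∂P :=
    norm_integral_le_integral_norm _
  refine h1.trans ?_
  have h2 : ∫ ω, ‖matVec (B ω) (x ω)‖ ∂P ≤ ∫ ω, frob (B ω) * ‖x ω‖ ∂P := by
    refine integral_mono (integrable_matVec hB hBint hxm hx).norm
      (integrable_mul_of_memL2 (memL2_frob hB hBint) hx.norm) ?_
    intro ω; exact norm_matVec_le _ _
  refine h2.trans ?_
  have h3 := int_CS (memL2_frob hB hBint) hx.norm (fun ω => frob_nonneg _)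
    (fun ω => norm_nonneg _)
  refine h3.trans_eq ?_
  congr 2
  apply integral_congr_ae; filter_upwards with ω using frob_sq _

lemma ae_summable_frobSq {B : ℕ → Ω → Matrix (Fin n) (Fin n) ℝ}
    (hB : ∀ k i j, Measurable fun ω => B k ω i j)
    (hBint : ∀ k, Integrable (fun ω => frobSq (B k ω)) P)
    (hBsum : Summable fun k => ∫ ω, frobSq (B k ω) ∂P) :
    (∀ᵐ ω ∂P, Summable fun k => frobSq (B k ω)) ∧
      Integrable (fun ω => ∑' k, frobSq (B k ω)) P := by
  have hmeas : ∀ k, Measurable fun ω => frobSq (B k ω) := fun k => measurable_frobSq (hB k)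
  set F : ℕ → Ω → ℝ≥0∞ := fun k ω => ENNReal.ofReal (frobSq (B k ω)) with hF
  have hFmeas : ∀ k, Measurable (F k) := fun k => (hmeas k).ennreal_ofReal
  have hlin : ∫⁻ ω, ∑' k, F k ω ∂P = ENNReal.ofReal (∑' k, ∫ ω, frobSq (B k ω) ∂P) := by
    rw [lintegral_tsum fun k => (hFmeas k).aemeasurable]
    rw [ENNReal.ofReal_tsum_of_nonneg (fun k => integral_nonneg fun ω => frobSq_nonneg _) hBsum]
    congr 1; ext k
    exact (MeasureTheory.ofReal_integral_eq_lintegral_ofReal (hBint k)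
      (Eventually.of_forall fun ω => frobSq_nonneg _)).symm
  have hne : ∫⁻ ω, ∑' k, F k ω ∂P ≠ ∞ := by rw [hlin]; exact ENNReal.ofReal_ne_top
  have hae : ∀ᵐ ω ∂P, ∑' k, F k ω < ∞ := ae_lt_top (Measurable.ennreal_tsum hFmeas) hne
  have hsummable : ∀ᵐ ω ∂P, Summable fun k => frobSq (B k ω) := by
    filter_upwards [hae] with ω hω
    have := ENNReal.summable_toReal hω.ne
    refine this.congr fun k => ?_
    simp [F, ENNReal.toReal_ofReal (frobSq_nonneg _)]
  refine ⟨hsummable, ?_⟩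
  have hint : Integrable (fun ω => (∑' k, F k ω).toReal) P :=
    integrable_toReal_of_lintegral_ne_top (Measurable.ennreal_tsum hFmeas).aemeasurable hne
  refine hint.congr ?_
  filter_upwards [hsummable] with ω hω
  rw [ENNReal.tsum_toReal_eq fun k => ENNReal.ofReal_ne_top]
  exact tsum_congr fun k => by simp [F, ENNReal.toReal_ofReal (frobSq_nonneg _)]

lemma tsum_CS {a b : ℕ → ℝ} (ha0 : ∀ k, 0 ≤ a k) (hb0 : ∀ k, 0 ≤ b k)
    (ha : Summable fun k => a k ^ 2) (hb : Summable fun k => b k ^ 2) :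
    ∑' k, a k * b k ≤ Real.sqrt (∑' k, a k ^ 2) * Real.sqrt (∑' k, b k ^ 2) := by
  apply tsum_le_of_sum_le'
  · positivity
  intro s
  calc ∑ k ∈ s, a k * b k ≤ Real.sqrt (∑ k ∈ s, a k ^ 2) * Real.sqrt (∑ k ∈ s, b k ^ 2) := by
        rw [← Real.sqrt_mul (Finset.sum_nonneg fun _ _ => sq_nonneg _)]
        rw [Real.le_sqrt (Finset.sum_nonneg fun k _ => mul_nonneg (ha0 k) (hb0 k))]
        · exact Finset.sum_mul_sq_le_sq_mul_sq _ _ _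
        · positivity
    _ ≤ Real.sqrt (∑' k, a k ^ 2) * Real.sqrt (∑' k, b k ^ 2) := by
        apply mul_le_mul <;>
          first
            | exact Real.sqrt_le_sqrt (Summable.sum_le_tsum s (fun k _ => sq_nonneg _) ‹_›)
            | positivity

lemma summable_mul_of_sq {a b : ℕ → ℝ} (ha0 : ∀ k, 0 ≤ a k) (hb0 : ∀ k, 0 ≤ b k)
    (ha : Summable fun k => a k ^ 2) (hb : Summable fun k => b k ^ 2) :
    Summable fun k => a k * b k := by
  refine Summable.of_nonneg_of_le (fun k => mul_nonneg (ha0 k) (hb0 k)) (fun k => ?_)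
    ((ha.add hb).div_const 2)
  nlinarith [sq_nonneg (a k - b k)]

end helpers

section key

variable {Ω : Type*} [MeasurableSpace Ω] {n : ℕ}

lemma key (P : Measure Ω) [IsProbabilityMeasure P]
    (B : ℕ → Ω → Matrix (Fin n) (Fin n) ℝ)
    (hBmeas : ∀ k i j, Measurable fun ω => B k ω i j)
    (hBint : ∀ k, Integrable (fun ω => frobSq (B k ω)) P)
    (hBsum : Summable fun k => ∫ ω, frobSq (B k ω) ∂P)
    (c : ℕ → EuclideanSpace ℝ (Fin n)) (hc : Summable fun k => ‖c k‖ ^ 2)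
    (y : Ω → EuclideanSpace ℝ (Fin n)) (hym : Measurable y) (hy : MemLp y 2 P)
    (g : Ω → EuclideanSpace ℝ (Fin n))
    (hg : Integrable (fun ω => ⟪g ω, y ω⟫) P) :
    ∫ ω, ⟪g ω + ∑' k, matVec (B k ω) (c k), y ω⟫ ∂P
      = ∫ ω, ⟪g ω, y ω⟫ ∂P
        + ∑' k, ⟪c k, ∫ ω, matVec (B k ω).transpose (y ω) ∂P⟫ := by
  obtain ⟨hsumae, hSint⟩ := ae_summable_frobSq hBmeas hBint hBsum
  set h : ℕ → Ω → ℝ := fun k ω => ⟪matVec (B k ω) (c k), y ω⟫ with hh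
  have hmeasvec : ∀ k, Measurable fun ω => matVec (B k ω) (c k) := fun k =>
    measurable_matVec (hBmeas k) measurable_const
  have hhmeas : ∀ k, AEStronglyMeasurable (h k) P := fun k =>
    AEStronglyMeasurable.inner (hmeasvec k).aestronglyMeasurable hym.aestronglyMeasurable
  have hnormb : ∀ k ω, ‖matVec (B k ω) (c k)‖ ≤ frob (B k ω) * ‖c k‖ := fun k ω =>
    norm_matVec_le _ _
  have hprod_summable : ∀ᵐ ω ∂P, Summable fun k => frob (B k ω) * ‖c k‖ := by
    filter_upwards [hsumae] with ω hω
    refine summable_mul_of_sq (fun k => frob_nonneg _) (fun k => norm_nonneg _) ?_ hc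
    refine hω.congr fun k => ?_
    rw [frob_sq]
  have hvec_summable : ∀ᵐ ω ∂P, Summable fun k => matVec (B k ω) (c k) := by
    filter_upwards [hprod_summable] with ω hω
    exact Summable.of_norm
      (Summable.of_nonneg_of_le (fun k => norm_nonneg _) (fun k => hnormb k ω) hω)
  have hlim : ∀ᵐ ω ∂P, HasSum (fun k => h k ω) ⟪∑' k, matVec (B k ω) (c k), y ω⟫ := by
    filter_upwards [hvec_summable] with ω hω
    have := hω.hasSum.mapL (innerSL ℝ (y ω))
    simp only [innerSL_apply_apply] at this
    have h2 : ⟪y ω, ∑' k, matVec (B k ω) (c k)⟫ = ⟪∑' k, matVec (B k ω) (c k), y ω⟫ :=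
      real_inner_comm _ _
    rw [h2] at this
    exact this.congr_fun fun k => real_inner_comm _ _
  set bnd : ℕ → Ω → ℝ := fun k ω => frob (B k ω) * ‖c k‖ * ‖y ω‖ with hbnd
  have h_bound : ∀ k, ∀ᵐ ω ∂P, ‖h k ω‖ ≤ bnd k ω := fun k => by
    filter_upwards with ω
    calc ‖h k ω‖ ≤ ‖matVec (B k ω) (c k)‖ * ‖y ω‖ := norm_inner_le_norm _ _
      _ ≤ frob (B k ω) * ‖c k‖ * ‖y ω‖ :=
          mul_le_mul_of_nonneg_right (hnormb k ω) (norm_nonneg _)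
  have hbnd_summable : ∀ᵐ ω ∂P, Summable fun k => bnd k ω := by
    filter_upwards [hprod_summable] with ω hω
    exact hω.mul_right _
  set Kc := Real.sqrt (∑' k, ‖c k‖ ^ 2) with hKc
  have hSnonneg : ∀ ω, 0 ≤ ∑' k, frobSq (B k ω) := fun ω =>
    tsum_nonneg fun k => frobSq_nonneg _
  have hsqrtS : MemLp (fun ω => Real.sqrt (∑' k, frobSq (B k ω))) 2 P := by
    refine (memLp_two_iff_integrable_sq
      (Real.continuous_sqrt.comp_aestronglyMeasurable hSint.aestronglyMeasurable)).mpr ?_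
    refine hSint.congr ?_
    filter_upwards with ω using (Real.sq_sqrt (hSnonneg ω)).symm
  have hgrand : Integrable (fun ω => Real.sqrt (∑' k, frobSq (B k ω)) * ‖y ω‖) P :=
    integrable_mul_of_memL2 hsqrtS hy.norm
  have hbndmeas : ∀ k, Measurable (bnd k) := fun k =>
    ((measurable_frob (hBmeas k)).mul_const _).mul hym.norm
  have htsum_bnd_meas : AEStronglyMeasurable (fun ω => ∑' k, bnd k ω) P := by
    refine aestronglyMeasurable_of_tendsto_ae atTop
      (f := fun N ω => ∑ k ∈ Finset.range N, bnd k ω)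
      (fun N => (Finset.measurable_sum _ fun k _ => hbndmeas k).aestronglyMeasurable) ?_
    filter_upwards [hbnd_summable] with ω hω
    exact hω.hasSum.tendsto_sum_nat
  -- key tsum bound
  have htsum_bnd_le : ∀ᵐ ω ∂P, ∑' k, bnd k ω ≤
      Kc * (Real.sqrt (∑' k, frobSq (B k ω)) * ‖y ω‖) := by
    filter_upwards [hsumae] with ω hω
    have hfrobsum : Summable fun k => frob (B k ω) ^ 2 := hω.congr fun k => (frob_sq _).symm
    have h1 : ∑' k, bnd k ω = (∑' k, frob (B k ω) * ‖c k‖) * ‖y ω‖ := tsum_mul_right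
    rw [h1]
    have hcs := tsum_CS (a := fun k => frob (B k ω)) (b := fun k => ‖c k‖)
      (fun k => frob_nonneg _) (fun k => norm_nonneg _) hfrobsum hc
    have h2 : ∑' k, frob (B k ω) ^ 2 = ∑' k, frobSq (B k ω) := tsum_congr fun k => frob_sq _
    rw [h2] at hcs
    calc (∑' k, frob (B k ω) * ‖c k‖) * ‖y ω‖
        ≤ (Real.sqrt (∑' k, frobSq (B k ω)) * Kc) * ‖y ω‖ :=
          mul_le_mul_of_nonneg_right hcs (norm_nonneg _)
      _ = Kc * (Real.sqrt (∑' k, frobSq (B k ω)) * ‖y ω‖) := by ring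
  have hbnd_int : Integrable (fun ω => ∑' k, bnd k ω) P := by
    refine Integrable.mono' (hgrand.const_mul Kc) htsum_bnd_meas ?_
    filter_upwards [htsum_bnd_le] with ω hω
    rw [Real.norm_of_nonneg (tsum_nonneg fun k =>
      mul_nonneg (mul_nonneg (frob_nonneg _) (norm_nonneg _)) (norm_nonneg _))]
    exact hω
  have hT : HasSum (fun k => ∫ ω, h k ω ∂P)
      (∫ ω, ⟪∑' k, matVec (B k ω) (c k), y ω⟫ ∂P) :=
    hasSum_integral_of_dominated_convergence bnd hhmeas h_bound hbnd_summable hbnd_int hlim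
  have hint_vec : ∀ k, Integrable (fun ω => matVec (B k ω).transpose (y ω)) P := fun k => by
    refine integrable_matVec (fun i j => hBmeas k j i) ?_ hym hy
    exact (hBint k).congr (Eventually.of_forall fun ω => (frobSq_transpose _).symm)
  have hterm : ∀ k, ∫ ω, h k ω ∂P
      = ⟪c k, ∫ ω, matVec (B k ω).transpose (y ω) ∂P⟫ := fun k => by
    rw [← integral_inner (hint_vec k) (c k)]
    apply integral_congr_ae
    filter_upwards with ω using inner_matVec _ _ _
  have hTint : Integrable (fun ω => ⟪∑' k, matVec (B k ω) (c k), y ω⟫) P := by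
    refine Integrable.mono' hbnd_int ?_ ?_
    · refine aestronglyMeasurable_of_tendsto_ae atTop
        (f := fun N ω => ∑ k ∈ Finset.range N, h k ω)
        (fun N => Finset.aestronglyMeasurable_fun_sum _ fun k _ => hhmeas k) ?_
      filter_upwards [hlim] with ω hω
      exact hω.tendsto_sum_nat
    · filter_upwards [hvec_summable, hprod_summable, hlim] with ω h1 h2 h3
      have hnorms : Summable fun k => ‖matVec (B k ω) (c k)‖ :=
        Summable.of_nonneg_of_le (fun k => norm_nonneg _) (fun k => hnormb k ω) h2
      calc ‖⟪∑' k, matVec (B k ω) (c k), y ω⟫‖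
          ≤ ‖∑' k, matVec (B k ω) (c k)‖ * ‖y ω‖ := norm_inner_le_norm _ _
        _ ≤ (∑' k, ‖matVec (B k ω) (c k)‖) * ‖y ω‖ :=
            mul_le_mul_of_nonneg_right (norm_tsum_le_tsum_norm hnorms) (norm_nonneg _)
        _ ≤ (∑' k, frob (B k ω) * ‖c k‖) * ‖y ω‖ :=
            mul_le_mul_of_nonneg_right (Summable.tsum_le_tsum (fun k => hnormb k ω) hnorms h2)
              (norm_nonneg _)
        _ = ∑' k, bnd k ω := tsum_mul_right.symm
  calc ∫ ω, ⟪g ω + ∑' k, matVec (B k ω) (c k), y ω⟫ ∂P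
      = ∫ ω, (⟪g ω, y ω⟫ + ⟪∑' k, matVec (B k ω) (c k), y ω⟫) ∂P := by
        apply integral_congr_ae
        filter_upwards with ω using inner_add_left _ _ _
    _ = ∫ ω, ⟪g ω, y ω⟫ ∂P + ∫ ω, ⟪∑' k, matVec (B k ω) (c k), y ω⟫ ∂P :=
        integral_add hg hTint
    _ = ∫ ω, ⟪g ω, y ω⟫ ∂P + ∑' k, ⟪c k, ∫ ω, matVec (B k ω).transpose (y ω) ∂P⟫ := by
        rw [← hT.tsum_eq]
        exact congrArg _ (tsum_congr hterm)

end key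

/-- The Hilbert-space adjoint of the mean-field operator
`𝒜ξ = Aξ + ∑ₖ Āₖ E[Ãₖ ξ]` on `L²(Ω; ℝⁿ)` is given by
`𝒜*y = Aᵀy + ∑ₖ Ãₖᵀ E[Āₖᵀ y]`, i.e. `E[⟨𝒜ξ, y⟩] = E[⟨ξ, 𝒜*y⟩]`
for all `ξ, y ∈ L²(Ω; ℝⁿ)`. -/
theorem meanField_operator_adjoint
    (n : ℕ) {Ω : Type*} [MeasurableSpace Ω] (P : Measure Ω) [IsProbabilityMeasure P]
    (A : Ω → Matrix (Fin n) (Fin n) ℝ)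
    (Abar Atil : ℕ → Ω → Matrix (Fin n) (Fin n) ℝ)
    (hAmeas : ∀ i j, Measurable fun ω => A ω i j)
    (hAbdd : ∃ C : ℝ, ∀ᵐ ω ∂P, frob (A ω) ≤ C)
    (hAbarMeas : ∀ k i j, Measurable fun ω => Abar k ω i j)
    (hAtilMeas : ∀ k i j, Measurable fun ω => Atil k ω i j)
    (hAbarInt : ∀ k, Integrable (fun ω => frobSq (Abar k ω)) P)
    (hAtilInt : ∀ k, Integrable (fun ω => frobSq (Atil k ω)) P)
    (hAbarSum : Summable fun k => ∫ ω, frobSq (Abar k ω) ∂P)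
    (hAtilSum : Summable fun k => ∫ ω, frobSq (Atil k ω) ∂P) :
    ∀ ξ y : Ω → EuclideanSpace ℝ (Fin n), MemLp ξ 2 P → MemLp y 2 P →
      ∫ ω, ⟪matVec (A ω) (ξ ω) +
          ∑' k, matVec (Abar k ω) (∫ ω', matVec (Atil k ω') (ξ ω') ∂P), y ω⟫ ∂P =
      ∫ ω, ⟪ξ ω, matVec (A ω).transpose (y ω) +
          ∑' k, matVec (Atil k ω).transpose
            (∫ ω', matVec (Abar k ω').transpose (y ω') ∂P)⟫ ∂P := by

  intro ξ y hξ hy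
  -- measurable versions
  set ξ' : Ω → EuclideanSpace ℝ (Fin n) := hξ.1.mk ξ with hξ'def
  set y' : Ω → EuclideanSpace ℝ (Fin n) := hy.1.mk y with hy'def
  have hξeq : ξ =ᵐ[P] ξ' := hξ.1.ae_eq_mk
  have hyeq : y =ᵐ[P] y' := hy.1.ae_eq_mk
  have hξ'm : Measurable ξ' := hξ.1.stronglyMeasurable_mk.measurable
  have hy'm : Measurable y' := hy.1.stronglyMeasurable_mk.measurable
  have hξ' : MemLp ξ' 2 P := hξ.ae_eq hξeq
  have hy' : MemLp y' 2 P := hy.ae_eq hyeq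
  -- replace ξ, y by measurable versions
  have hceq : ∀ k, (∫ ω', matVec (Atil k ω') (ξ ω') ∂P)
      = ∫ ω', matVec (Atil k ω') (ξ' ω') ∂P := fun k => by
    apply integral_congr_ae; filter_upwards [hξeq] with ω hω; rw [hω]
  have hdeq : ∀ k, (∫ ω', matVec (Abar k ω').transpose (y ω') ∂P)
      = ∫ ω', matVec (Abar k ω').transpose (y' ω') ∂P := fun k => by
    apply integral_congr_ae; filter_upwards [hyeq] with ω hω; rw [hω]
  simp_rw [hceq, hdeq]
  have hLHS : ∫ ω, ⟪matVec (A ω) (ξ ω) +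
        ∑' k, matVec (Abar k ω) (∫ ω', matVec (Atil k ω') (ξ' ω') ∂P), y ω⟫ ∂P
      = ∫ ω, ⟪matVec (A ω) (ξ' ω) +
        ∑' k, matVec (Abar k ω) (∫ ω', matVec (Atil k ω') (ξ' ω') ∂P), y' ω⟫ ∂P := by
    apply integral_congr_ae; filter_upwards [hξeq, hyeq] with ω h1 h2; rw [h1, h2]
  have hRHS : ∫ ω, ⟪ξ ω, matVec (A ω).transpose (y ω) +
        ∑' k, matVec (Atil k ω).transpose
          (∫ ω', matVec (Abar k ω').transpose (y' ω') ∂P)⟫ ∂P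
      = ∫ ω, ⟪ξ' ω, matVec (A ω).transpose (y' ω) +
        ∑' k, matVec (Atil k ω).transpose
          (∫ ω', matVec (Abar k ω').transpose (y' ω') ∂P)⟫ ∂P := by
    apply integral_congr_ae; filter_upwards [hξeq, hyeq] with ω h1 h2; rw [h1, h2]
  rw [hLHS, hRHS]
  clear hLHS hRHS hceq hdeq hξeq hyeq
  -- notation
  set c : ℕ → EuclideanSpace ℝ (Fin n) := fun k => ∫ ω', matVec (Atil k ω') (ξ' ω') ∂P with hcdef
  set d : ℕ → EuclideanSpace ℝ (Fin n) :=
    fun k => ∫ ω', matVec (Abar k ω').transpose (y' ω') ∂P with hddef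
  obtain ⟨C, hC⟩ := hAbdd
  have hC' : ∀ᵐ ω ∂P, frob (A ω) ≤ max C 0 := by
    filter_upwards [hC] with ω hω using hω.trans (le_max_left _ _)
  -- square-summability of c and d
  have hnonneg_til : ∀ k, 0 ≤ ∫ ω, frobSq (Atil k ω) ∂P := fun k =>
    integral_nonneg fun ω => frobSq_nonneg _
  have hnonneg_bar : ∀ k, 0 ≤ ∫ ω, frobSq (Abar k ω) ∂P := fun k =>
    integral_nonneg fun ω => frobSq_nonneg _
  have hc2 : Summable fun k => ‖c k‖ ^ 2 := by
    refine Summable.of_nonneg_of_le (fun k => sq_nonneg _) (fun k => ?_)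
      (hAtilSum.mul_right (∫ ω, ‖ξ' ω‖ ^ 2 ∂P))
    have hb := norm_integral_matVec_le (hAtilMeas k) (hAtilInt k) hξ'm hξ'
    have h0 : (0:ℝ) ≤ ∫ ω, ‖ξ' ω‖ ^ 2 ∂P := integral_nonneg fun ω => sq_nonneg _
    calc ‖c k‖ ^ 2 ≤ (Real.sqrt (∫ ω, frobSq (Atil k ω) ∂P)
          * Real.sqrt (∫ ω, ‖ξ' ω‖ ^ 2 ∂P)) ^ 2 :=
          pow_le_pow_left₀ (norm_nonneg _) hb 2
      _ = (∫ ω, frobSq (Atil k ω) ∂P) * ∫ ω, ‖ξ' ω‖ ^ 2 ∂P := by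
          rw [mul_pow, Real.sq_sqrt (hnonneg_til k), Real.sq_sqrt h0]
  have hd2 : Summable fun k => ‖d k‖ ^ 2 := by
    refine Summable.of_nonneg_of_le (fun k => sq_nonneg _) (fun k => ?_)
      (hAbarSum.mul_right (∫ ω, ‖y' ω‖ ^ 2 ∂P))
    have hb := norm_integral_matVec_le (B := fun ω => (Abar k ω).transpose)
      (fun i j => hAbarMeas k j i)
      ((hAbarInt k).congr (Eventually.of_forall fun ω => (frobSq_transpose _).symm)) hy'm hy'
    have h0 : (0:ℝ) ≤ ∫ ω, ‖y' ω‖ ^ 2 ∂P := integral_nonneg fun ω => sq_nonneg _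
    have hbt : ∫ ω, frobSq (Abar k ω).transpose ∂P = ∫ ω, frobSq (Abar k ω) ∂P :=
      integral_congr_ae (Eventually.of_forall fun ω => frobSq_transpose _)
    rw [hbt] at hb
    calc ‖d k‖ ^ 2 ≤ (Real.sqrt (∫ ω, frobSq (Abar k ω) ∂P)
          * Real.sqrt (∫ ω, ‖y' ω‖ ^ 2 ∂P)) ^ 2 :=
          pow_le_pow_left₀ (norm_nonneg _) hb 2
      _ = (∫ ω, frobSq (Abar k ω) ∂P) * ∫ ω, ‖y' ω‖ ^ 2 ∂P := by
          rw [mul_pow, Real.sq_sqrt (hnonneg_bar k), Real.sq_sqrt h0]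
  -- integrability of the two `g`-terms
  have hgint1 : Integrable (fun ω => ⟪matVec (A ω) (ξ' ω), y' ω⟫) P := by
    refine Integrable.mono'
      ((integrable_mul_of_memL2 hξ'.norm hy'.norm).const_mul (max C 0))
      (AEStronglyMeasurable.inner (measurable_matVec hAmeas hξ'm).aestronglyMeasurable
        hy'm.aestronglyMeasurable) ?_
    filter_upwards [hC'] with ω hω
    calc ‖⟪matVec (A ω) (ξ' ω), y' ω⟫‖ ≤ ‖matVec (A ω) (ξ' ω)‖ * ‖y' ω‖ :=
          norm_inner_le_norm _ _
      _ ≤ (frob (A ω) * ‖ξ' ω‖) * ‖y' ω‖ :=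
          mul_le_mul_of_nonneg_right (norm_matVec_le _ _) (norm_nonneg _)
      _ ≤ (max C 0 * ‖ξ' ω‖) * ‖y' ω‖ := by
          have := mul_le_mul_of_nonneg_right
            (mul_le_mul_of_nonneg_right hω (norm_nonneg (ξ' ω))) (norm_nonneg (y' ω))
          exact this
      _ = max C 0 * (‖ξ' ω‖ * ‖y' ω‖) := by ring
  have hgint2 : Integrable (fun ω => ⟪matVec (A ω).transpose (y' ω), ξ' ω⟫) P := by
    refine Integrable.mono'
      ((integrable_mul_of_memL2 hy'.norm hξ'.norm).const_mul (max C 0))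
      (AEStronglyMeasurable.inner
        (measurable_matVec (fun i j => hAmeas j i) hy'm).aestronglyMeasurable
        hξ'm.aestronglyMeasurable) ?_
    filter_upwards [hC'] with ω hω
    have hfrobt : frob (A ω).transpose = frob (A ω) := by rw [frob, frobSq_transpose]; rfl
    calc ‖⟪matVec (A ω).transpose (y' ω), ξ' ω⟫‖
        ≤ ‖matVec (A ω).transpose (y' ω)‖ * ‖ξ' ω‖ := norm_inner_le_norm _ _
      _ ≤ (frob (A ω).transpose * ‖y' ω‖) * ‖ξ' ω‖ :=
          mul_le_mul_of_nonneg_right (norm_matVec_le _ _) (norm_nonneg _)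
      _ ≤ (max C 0 * ‖y' ω‖) * ‖ξ' ω‖ := by
          rw [hfrobt]
          exact mul_le_mul_of_nonneg_right
            (mul_le_mul_of_nonneg_right hω (norm_nonneg (y' ω))) (norm_nonneg (ξ' ω))
      _ = max C 0 * (‖y' ω‖ * ‖ξ' ω‖) := by ring
  -- apply key on the left
  have hL := key P Abar hAbarMeas hAbarInt hAbarSum c hc2 y' hy'm hy'
    (fun ω => matVec (A ω) (ξ' ω)) hgint1
  -- apply key on the right (transposed family)
  have hR := key P (fun k ω => (Atil k ω).transpose) (fun k i j => hAtilMeas k j i)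
    (fun k => (hAtilInt k).congr (Eventually.of_forall fun ω => (frobSq_transpose _).symm))
    (hAtilSum.congr fun k =>
      (integral_congr_ae (Eventually.of_forall fun ω => (frobSq_transpose _))).symm)
    d hd2 ξ' hξ'm hξ' (fun ω => matVec (A ω).transpose (y' ω)) hgint2
  simp only [Matrix.transpose_transpose] at hR
  -- rewrite RHS integrand to match key's form
  have hflip : ∫ ω, ⟪ξ' ω, matVec (A ω).transpose (y' ω) +
        ∑' k, matVec (Atil k ω).transpose (d k)⟫ ∂P
      = ∫ ω, ⟪matVec (A ω).transpose (y' ω) +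
        ∑' k, matVec (Atil k ω).transpose (d k), ξ' ω⟫ ∂P := by
    apply integral_congr_ae; filter_upwards with ω using real_inner_comm _ _
  rw [hflip, hR, hL]
  congr 1
  · apply integral_congr_ae; filter_upwards with ω
    rw [inner_matVec, real_inner_comm]
  · exact tsum_congr fun k => real_inner_comm _ _
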